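/- With p = E_u/N, the per-user SNR expression SNR(N) = (p(M−K)(N a + γ)²) / ((p·s(N) + σ²)(N a + γ + σ²/(τp))), where s(N) = ∑_{i=1}^K 1/(1/(N a_i + γ_i) + τp/σ²), converges as N → ∞ to E_u(M−K)·a² / ((∑_i E_u/(τE_u/σ² + 1/a_i) + σ²)(a + σ²/(τE_u))). -/

import Mathlib

open Filter Topology

/-- Power scaling law: with `p = E_u/N`, the per-user SNR
`SNR(N) = p(M−K)(Na+γ)² / ((p·s(N)+σ²)(Na+γ+σ²/(τp)))`, with
`s(N) = ∑ᵢ 1/(1/(Naᵢ+γᵢ) + τp/σ²)`, converges as `N → ∞` to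
`E_u(M−K)a² / ((∑ᵢ E_u/(τE_u/σ² + 1/aᵢ) + σ²)(a + σ²/(τE_u)))`. -/
theorem power_scaling_law (M K : ℕ) (hMK : K < M)
    (aV : Fin K → ℝ) (γV : Fin K → ℝ) (k : Fin K)
    (ha : ∀ i, 0 < aV i) (hγ : ∀ i, 0 ≤ γV i)
    (σ2 τ Eu : ℝ) (hσ2 : 0 < σ2) (hτ : 0 < τ) (hEu : 0 < Eu) :
    Tendsto
      (fun N : ℝ =>
        let p := Eu / N
        let s := ∑ i, 1 / (1 / (N * aV i + γV i) + τ * p / σ2)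
        (p * ((M : ℝ) - K) * (N * aV k + γV k) ^ 2) /
          ((p * s + σ2) * (N * aV k + γV k + σ2 / (τ * p))))
      atTop
      (𝓝 (Eu * ((M : ℝ) - K) * (aV k) ^ 2 /
        ((∑ i, Eu / (τ * Eu / σ2 + 1 / aV i) + σ2) * (aV k + σ2 / (τ * Eu))))) := by
  -- The auxiliary function in terms of N
  set g : ℝ → ℝ := fun N =>
    Eu * ((M : ℝ) - K) * (aV k + γV k / N) ^ 2 /
      ((∑ i, Eu / (τ * Eu / σ2 + 1 / (aV i + γV i / N)) + σ2) *
        ((aV k + γV k / N) + σ2 / (τ * Eu))) with hg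
  have hlim : Tendsto g atTop (𝓝 (Eu * ((M : ℝ) - K) * (aV k) ^ 2 /
      ((∑ i, Eu / (τ * Eu / σ2 + 1 / aV i) + σ2) * (aV k + σ2 / (τ * Eu))))) := by
    have hbase : ∀ c : ℝ, Tendsto (fun N : ℝ => c / N) atTop (𝓝 0) :=
      fun c => tendsto_const_nhds.div_atTop tendsto_id
    have hfi : ∀ i, Tendsto (fun N : ℝ => aV i + γV i / N) atTop (𝓝 (aV i)) := by
      intro i
      simpa using tendsto_const_nhds.add (hbase (γV i))
    have hnum : Tendsto (fun N : ℝ => Eu * ((M : ℝ) - K) * (aV k + γV k / N) ^ 2)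
        atTop (𝓝 (Eu * ((M : ℝ) - K) * (aV k) ^ 2)) :=
      tendsto_const_nhds.mul ((hfi k).pow 2)
    have hsum : Tendsto (fun N : ℝ => ∑ i, Eu / (τ * Eu / σ2 + 1 / (aV i + γV i / N)))
        atTop (𝓝 (∑ i, Eu / (τ * Eu / σ2 + 1 / aV i))) := by
      refine tendsto_finset_sum _ (fun i _ => ?_)
      refine tendsto_const_nhds.div (tendsto_const_nhds.add (tendsto_const_nhds.div (hfi i)
        (ne_of_gt (ha i)))) ?_
      have hai := ha i
      positivity
    have hden : Tendsto (fun N : ℝ =>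
        (∑ i, Eu / (τ * Eu / σ2 + 1 / (aV i + γV i / N)) + σ2) *
          ((aV k + γV k / N) + σ2 / (τ * Eu))) atTop
        (𝓝 ((∑ i, Eu / (τ * Eu / σ2 + 1 / aV i) + σ2) * (aV k + σ2 / (τ * Eu)))) :=
      (hsum.add tendsto_const_nhds).mul ((hfi k).add tendsto_const_nhds)
    have hne : (∑ i, Eu / (τ * Eu / σ2 + 1 / aV i) + σ2) * (aV k + σ2 / (τ * Eu)) ≠ 0 := by
      have h1 : (0:ℝ) < ∑ i, Eu / (τ * Eu / σ2 + 1 / aV i) + σ2 := by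
        have : (0:ℝ) ≤ ∑ i, Eu / (τ * Eu / σ2 + 1 / aV i) := by
          refine Finset.sum_nonneg (fun i _ => ?_)
          have := ha i
          positivity
        linarith
      have h2 : (0:ℝ) < aV k + σ2 / (τ * Eu) := by have := ha k; positivity
      positivity
    exact hnum.div hden hne
  refine Tendsto.congr' ?_ hlim
  rw [eventuallyEq_comm]
  filter_upwards [eventually_ge_atTop (1:ℝ)] with N hN
  have hN0 : (0:ℝ) < N := lt_of_lt_of_le one_pos hN
  have hNne : N ≠ 0 := ne_of_gt hN0
  show (Eu / N * ((M : ℝ) - K) * (N * aV k + γV k) ^ 2) /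
          ((Eu / N * ∑ i, 1 / (1 / (N * aV i + γV i) + τ * (Eu / N) / σ2) + σ2) *
            (N * aV k + γV k + σ2 / (τ * (Eu / N))))
      = Eu * ((M : ℝ) - K) * (aV k + γV k / N) ^ 2 /
      ((∑ i, Eu / (τ * Eu / σ2 + 1 / (aV i + γV i / N)) + σ2) *
        ((aV k + γV k / N) + σ2 / (τ * Eu)))
  have hpos : ∀ i, 0 < aV i + γV i / N := by
    intro i
    have := ha i; have := hγ i
    have : 0 ≤ γV i / N := div_nonneg (hγ i) hN0.le
    have := ha i
    linarith
  have hterm : ∀ i, 1 / (1 / (N * aV i + γV i) + τ * (Eu / N) / σ2)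
      = N * (1 / (τ * Eu / σ2 + 1 / (aV i + γV i / N))) := by
    intro i
    have h1 : 0 < N * aV i + γV i := by
      have := mul_pos hN0 (ha i); have := hγ i; linarith
    have h2 := hpos i
    have key : 1 / (N * aV i + γV i) + τ * (Eu / N) / σ2
        = (τ * Eu / σ2 + 1 / (aV i + γV i / N)) / N := by
      have h3 : (γV i + N * aV i) * (N * aV i + γV i)⁻¹ = 1 := by
        rw [add_comm, mul_inv_cancel₀ h1.ne']
      field_simp [h1.ne', h2.ne']
      linear_combination
    rw [key, one_div_div]
    rw [div_eq_mul_one_div]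
  have hsum' : (∑ i, 1 / (1 / (N * aV i + γV i) + τ * (Eu / N) / σ2))
      = N * ∑ i, 1 / (τ * Eu / σ2 + 1 / (aV i + γV i / N)) := by
    rw [Finset.mul_sum]
    exact Finset.sum_congr rfl (fun i _ => hterm i)
  rw [hsum']
  -- now pure algebra
  have hS : ∀ i, Eu / (τ * Eu / σ2 + 1 / (aV i + γV i / N))
      = Eu * (1 / (τ * Eu / σ2 + 1 / (aV i + γV i / N))) := fun i => div_eq_mul_one_div _ _
  have hSsum : (∑ i, Eu / (τ * Eu / σ2 + 1 / (aV i + γV i / N)))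
      = Eu * ∑ i, 1 / (τ * Eu / σ2 + 1 / (aV i + γV i / N)) := by
    rw [Finset.mul_sum]; exact Finset.sum_congr rfl (fun i _ => hS i)
  rw [hSsum]
  set S := ∑ i, 1 / (τ * Eu / σ2 + 1 / (aV i + γV i / N)) with hSdef
  have hEuN : Eu / N * (N * S) = Eu * S := by field_simp
  rw [hEuN]
  have hden2 : N * aV k + γV k + σ2 / (τ * (Eu / N)) = N * ((aV k + γV k / N) + σ2 / (τ * Eu)) := by
    field_simp
  have hnum2 : Eu / N * ((M : ℝ) - K) * (N * aV k + γV k) ^ 2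
      = N * (Eu * ((M : ℝ) - K) * (aV k + γV k / N) ^ 2) := by
    field_simp
  rw [hden2, hnum2,
    show (Eu * S + σ2) * (N * (aV k + γV k / N + σ2 / (τ * Eu)))
      = N * ((Eu * S + σ2) * (aV k + γV k / N + σ2 / (τ * Eu))) by ring,
    mul_div_mul_left _ _ hNne]
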